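/- Let U and V be independent centered Gaussian random vectors, U = (U₀, U₁, …, Uₙ) and V = (V₀, V₁, …, Vₙ), and set Zⱼ = Uⱼ + Vⱼ (or more generally Zⱼ = Uⱼ - Vⱼ). Then the conditional variance satisfies Var(Z₀ | Z₁, …, Zₙ) ≥ Var(U₀ | U₁, …, Uₙ) + Var(V₀ | V₁, …, Vₙ), where conditional variance is interpreted as the infimum over linear predictors: Var(Z₀|Z₁,…,Zₙ) = inf_{a∈ℝⁿ} E[(Z₀ - Σⱼ aⱼZⱼ)²]. -/

import Mathlib

open MeasureTheory ProbabilityTheory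

theorem stmt_10 {Ω : Type*} [MeasurableSpace Ω] (μ : Measure Ω) [IsProbabilityMeasure μ]
    (n : ℕ) (U V : Fin (n + 1) → Ω → ℝ)
    (hUmeas : ∀ i, Measurable (U i)) (hVmeas : ∀ i, Measurable (V i))
    (hUL2 : ∀ i, MemLp (U i) 2 μ) (hVL2 : ∀ i, MemLp (V i) 2 μ)
    (hUcent : ∀ i, ∫ ω, U i ω ∂μ = 0) (hVcent : ∀ i, ∫ ω, V i ω ∂μ = 0)
    (hUgauss : ∀ a : Fin (n + 1) → ℝ, ∃ v : NNReal,
      Measure.map (fun ω => ∑ i, a i * U i ω) μ = gaussianReal 0 v)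
    (hVgauss : ∀ a : Fin (n + 1) → ℝ, ∃ v : NNReal,
      Measure.map (fun ω => ∑ i, a i * V i ω) μ = gaussianReal 0 v)
    (hindep : IndepFun (fun ω i => U i ω) (fun ω i => V i ω) μ)
    (Z : Fin (n + 1) → Ω → ℝ)
    (hZ : (∀ i ω, Z i ω = U i ω + V i ω) ∨ (∀ i ω, Z i ω = U i ω - V i ω)) :
    (⨅ a : Fin n → ℝ, ∫ ω, (U 0 ω - ∑ j, a j * U j.succ ω) ^ 2 ∂μ)
      + (⨅ a : Fin n → ℝ, ∫ ω, (V 0 ω - ∑ j, a j * V j.succ ω) ^ 2 ∂μ)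
      ≤ ⨅ a : Fin n → ℝ, ∫ ω, (Z 0 ω - ∑ j, a j * Z j.succ ω) ^ 2 ∂μ := by
  classical
  let f : (Fin n → ℝ) → Ω → ℝ := fun a ω => U 0 ω - ∑ j, a j * U j.succ ω
  let g : (Fin n → ℝ) → Ω → ℝ := fun a ω => V 0 ω - ∑ j, a j * V j.succ ω
  have hfL2 : ∀ a, MemLp (f a) 2 μ := by
    intro a
    have h1 : MemLp (fun ω => ∑ j : Fin n, a j * U j.succ ω) 2 μ := by
      have := memLp_finset_sum' (μ := μ) (p := 2) Finset.univ
        (f := fun j : Fin n => fun ω => a j * U j.succ ω)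
        (fun j _ => (hUL2 j.succ).const_mul (a j))
      convert this using 1
      ext ω; simp
    exact (hUL2 0).sub h1
  have hgL2 : ∀ a, MemLp (g a) 2 μ := by
    intro a
    have h1 : MemLp (fun ω => ∑ j : Fin n, a j * V j.succ ω) 2 μ := by
      have := memLp_finset_sum' (μ := μ) (p := 2) Finset.univ
        (f := fun j : Fin n => fun ω => a j * V j.succ ω)
        (fun j _ => (hVL2 j.succ).const_mul (a j))
      convert this using 1
      ext ω; simp
    exact (hVL2 0).sub h1
  have hfint : ∀ a, Integrable (f a) μ := fun a => (hfL2 a).integrable one_le_two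
  have hgint : ∀ a, Integrable (g a) μ := fun a => (hgL2 a).integrable one_le_two
  have hfmean : ∀ a, ∫ ω, f a ω ∂μ = 0 := by
    intro a
    have hint : ∀ j : Fin n, Integrable (fun ω => a j * U j.succ ω) μ := fun j =>
      ((hUL2 j.succ).integrable one_le_two).const_mul _
    show ∫ ω, (U 0 ω - ∑ j, a j * U j.succ ω) ∂μ = 0
    rw [integral_sub ((hUL2 0).integrable one_le_two)
      (integrable_finset_sum _ (fun j _ => hint j)),
      integral_finset_sum _ (fun j _ => hint j)]
    simp [integral_const_mul, hUcent]
  have hgmean : ∀ a, ∫ ω, g a ω ∂μ = 0 := by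
    intro a
    have hint : ∀ j : Fin n, Integrable (fun ω => a j * V j.succ ω) μ := fun j =>
      ((hVL2 j.succ).integrable one_le_two).const_mul _
    show ∫ ω, (V 0 ω - ∑ j, a j * V j.succ ω) ∂μ = 0
    rw [integral_sub ((hVL2 0).integrable one_le_two)
      (integrable_finset_sum _ (fun j _ => hint j)),
      integral_finset_sum _ (fun j _ => hint j)]
    simp [integral_const_mul, hVcent]
  have hind : ∀ a, IndepFun (f a) (g a) μ := by
    intro a
    have hφ : Measurable (fun x : Fin (n + 1) → ℝ => x 0 - ∑ j : Fin n, a j * x j.succ) := by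
      fun_prop
    exact hindep.comp hφ hφ
  have hmul : ∀ a, Integrable (fun ω => f a ω * g a ω) μ := fun a =>
    (hind a).integrable_mul (hfint a) (hgint a)
  have hcross : ∀ a, ∫ ω, f a ω * g a ω ∂μ = 0 := by
    intro a
    have := (hind a).integral_mul_eq_mul_integral (hfint a).aestronglyMeasurable (hgint a).aestronglyMeasurable
    simpa [hfmean a, hgmean a] using this
  have hEZ : ∀ a : Fin n → ℝ, ∫ ω, (Z 0 ω - ∑ j, a j * Z j.succ ω) ^ 2 ∂μ
      = (∫ ω, f a ω ^ 2 ∂μ) + ∫ ω, g a ω ^ 2 ∂μ := by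
    intro a
    have expand : ∀ c : ℝ, ∀ ω, (Z 0 ω - ∑ j, a j * Z j.succ ω)
        = f a ω + c * g a ω → (Z 0 ω - ∑ j, a j * Z j.succ ω) ^ 2
        = f a ω ^ 2 + (c ^ 2 * g a ω ^ 2 + (2 * c) * (f a ω * g a ω)) := by
      intro c ω h; rw [h]; ring
    obtain ⟨c, hc, hkey⟩ : ∃ c : ℝ, c ^ 2 = 1 ∧ ∀ ω,
        (Z 0 ω - ∑ j, a j * Z j.succ ω) = f a ω + c * g a ω := by
      rcases hZ with h | h
      · exact ⟨1, by norm_num, fun ω => by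
          simp only [h, f, g]; rw [Finset.sum_congr rfl (fun j _ => mul_add (a j) _ _),
            Finset.sum_add_distrib]; ring⟩
      · exact ⟨-1, by norm_num, fun ω => by
          simp only [h, f, g]; rw [Finset.sum_congr rfl (fun j _ => mul_sub (a j) _ _),
            Finset.sum_sub_distrib]; ring⟩
    calc ∫ ω, (Z 0 ω - ∑ j, a j * Z j.succ ω) ^ 2 ∂μ
        = ∫ ω, (f a ω ^ 2 + (c ^ 2 * g a ω ^ 2 + (2 * c) * (f a ω * g a ω))) ∂μ := by
          congr 1; ext ω; exact expand c ω (hkey ω)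
      _ = (∫ ω, f a ω ^ 2 ∂μ) + ((c ^ 2 * ∫ ω, g a ω ^ 2 ∂μ)
            + (2 * c) * ∫ ω, f a ω * g a ω ∂μ) := by
          have hI2 : Integrable (fun ω => c ^ 2 * g a ω ^ 2 + 2 * c * (f a ω * g a ω)) μ :=
            (((hgL2 a).integrable_sq).const_mul (c ^ 2)).add ((hmul a).const_mul (2 * c))
          rw [integral_add (hfL2 a).integrable_sq hI2,
            integral_add (((hgL2 a).integrable_sq).const_mul (c ^ 2)) ((hmul a).const_mul (2 * c)),
            integral_const_mul, integral_const_mul]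
      _ = (∫ ω, f a ω ^ 2 ∂μ) + ∫ ω, g a ω ^ 2 ∂μ := by
          rw [hc, hcross a]; ring
  refine le_ciInf fun a => ?_
  rw [hEZ a]
  have hbU : BddBelow (Set.range fun a => ∫ ω, f a ω ^ 2 ∂μ) :=
    ⟨0, by rintro x ⟨a, rfl⟩; exact integral_nonneg fun ω => sq_nonneg _⟩
  have hbV : BddBelow (Set.range fun a => ∫ ω, g a ω ^ 2 ∂μ) :=
    ⟨0, by rintro x ⟨a, rfl⟩; exact integral_nonneg fun ω => sq_nonneg _⟩
  exact add_le_add (ciInf_le hbU a) (ciInf_le hbV a)
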